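/- Let F be a field with characteristic equal to 2 and let n ≥ 2. Then there exists a map φ : M_n(F) → M_n(F) satisfying φ(XY + YX) = φ(X)φ(Y) + φ(Y)φ(X) for all X, Y ∈ M_n(F) which is neither constant nor additive. (Concretely, the map sending a fixed trace-one matrix A to a fixed nonzero matrix and every other matrix to zero has this property, because every matrix of the form XY + YX has trace zero in characteristic 2.) -/

import Mathlib

theorem stmt_19 {F : Type*} [Field F] (h2 : ringChar F = 2) (n : ℕ) (hn : 2 ≤ n) :
    ∃ φ : Matrix (Fin n) (Fin n) F → Matrix (Fin n) (Fin n) F,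
      (∀ X Y : Matrix (Fin n) (Fin n) F,
        φ (X * Y + Y * X) = φ X * φ Y + φ Y * φ X) ∧
      ¬ (∃ C : Matrix (Fin n) (Fin n) F, ∀ X, φ X = C) ∧
      ¬ (∀ X Y : Matrix (Fin n) (Fin n) F, φ (X + Y) = φ X + φ Y) := by
  classical
  have htwo : (2 : F) = 0 := by
    have := ringChar.Nat.cast_ringChar (R := F)
    rw [h2] at this
    exact_mod_cast this
  have hself : ∀ a : F, a + a = 0 := by
    intro a
    have : a + a = 2 * a := by ring
    rw [this, htwo, zero_mul]
  set i0 : Fin n := ⟨0, by omega⟩ with hi0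
  set i1 : Fin n := ⟨1, by omega⟩ with hi1
  have hne : i1 ≠ i0 := by
    simp [hi0, hi1, Fin.ext_iff]
  set E : Matrix (Fin n) (Fin n) F := Matrix.single i0 i0 1 with hE
  set D : Matrix (Fin n) (Fin n) F := Matrix.single i0 i1 1 with hD
  have htrE : Matrix.trace E = 1 := Matrix.trace_single_eq_same i0 1
  have hE0 : E ≠ 0 := by
    intro h'
    rw [h', Matrix.trace_zero] at htrE
    exact one_ne_zero htrE.symm
  refine ⟨fun X => if X = E then E else 0, ?_, ?_, ?_⟩
  · intro X Y
    have hlhs : X * Y + Y * X ≠ E := by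
      intro h
      have : Matrix.trace (X * Y + Y * X) = 1 := by rw [h, htrE]
      rw [Matrix.trace_add, Matrix.trace_mul_comm Y X, hself] at this
      exact one_ne_zero this.symm
    simp only [if_neg hlhs]
    by_cases hX : X = E <;> by_cases hY : Y = E <;> simp [hX, hY]
    ext i j
    simp only [Matrix.add_apply, Matrix.zero_apply]
    exact (hself _).symm
  · rintro ⟨C, hC⟩
    have h1 := hC E
    have h0 := hC 0
    simp only [if_pos rfl] at h1
    simp only [if_neg (Ne.symm hE0)] at h0
    exact hE0 (h1.trans h0.symm)
  · intro h
    have hkey := h D (E + D)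
    have hsum : D + (E + D) = E := by
      ext i j
      simp only [Matrix.add_apply]
      rw [add_comm (D i j), add_assoc, hself, add_zero]
    have hD_ne : D ≠ E := by
      intro h'
      have := congrFun (congrFun h' i0) i0
      rw [hD, hE, Matrix.single_apply_same,
        Matrix.single_apply_of_col_ne i0 i0 hne 1] at this
      exact one_ne_zero this.symm
    have hED_ne : E + D ≠ E := by
      intro h'
      have := congrFun (congrFun h' i0) i1
      simp only [Matrix.add_apply] at this
      rw [hD, hE, Matrix.single_apply_same,
        Matrix.single_apply_of_col_ne i0 i0 hne.symm 1] at this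
      simp at this
    simp only [hsum, if_pos rfl, if_neg hD_ne, if_neg hED_ne, add_zero] at hkey
    exact hE0 hkey
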